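/- Let A be a unital C*-algebra, μ ∈ (−1,1) a real number, and S, a ∈ A with ‖S‖ ≤ 1 and S^* a = μ a S^*. Then the series ∑_{n=0}^∞ μ^n S^n (1 − S S^*) a S^{*n} converges in the norm of A and its sum equals a. -/

import Mathlib

/-- Let `A` be a unital C*-algebra, `μ ∈ (-1,1)`, and `S, a ∈ A` with
`‖S‖ ≤ 1` and `S* a = μ a S*`. Then `∑_{n=0}^∞ μⁿ Sⁿ (1 - S S*) a S*ⁿ` converges in norm
and its sum equals `a`. -/
theorem hasSum_shift_decomposition {A : Type*} [CStarAlgebra A]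
    {μ : ℝ} (hμ₁ : -1 < μ) (hμ₂ : μ < 1) (S a : A)
    (hS : ‖S‖ ≤ 1) (hcomm : star S * a = μ • (a * star S)) :
    HasSum (fun n : ℕ => μ ^ n • (S ^ n * (1 - S * star S) * a * (star S) ^ n)) a := by
  have hμ : |μ| < 1 := abs_lt.mpr ⟨hμ₁, hμ₂⟩
  set f : ℕ → A := fun n => μ ^ n • (S ^ n * (1 - S * star S) * a * (star S) ^ n) with hf
  set b : ℕ → A := fun n => μ ^ n • (S ^ n * a * (star S) ^ n) with hb
  have hone : ‖(1 : A)‖ ≤ 1 := by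
    have h1 : ‖(1 : A)‖ * ‖(1 : A)‖ = ‖(1 : A)‖ := by
      rw [← CStarRing.norm_star_mul_self]; simp
    nlinarith [norm_nonneg (1 : A)]
  have hSn : ∀ n : ℕ, ‖S ^ n‖ ≤ 1 := by
    intro n
    induction n with
    | zero => simpa using hone
    | succ k ih =>
      rw [pow_succ]
      calc ‖S ^ k * S‖ ≤ ‖S ^ k‖ * ‖S‖ := norm_mul_le _ _
        _ ≤ 1 * 1 := by gcongr
        _ = 1 := one_mul 1
  have hsSn : ∀ n : ℕ, ‖(star S) ^ n‖ ≤ 1 := fun n => by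
    rw [← star_pow, norm_star]; exact hSn n
  have key : ∀ n, f n = b n - b (n + 1) := by
    intro n
    have h1 : S ^ n * (1 - S * star S) * a * (star S) ^ n
        = S ^ n * a * (star S) ^ n - S ^ n * S * (star S * a) * (star S) ^ n := by
      noncomm_ring
    have h2 : S ^ n * S * (a * star S) * (star S) ^ n
        = S ^ (n + 1) * a * (star S) ^ (n + 1) := by
      rw [pow_succ S, pow_succ' (star S)]; noncomm_ring
    simp only [hf, hb, h1, hcomm, mul_smul_comm, smul_mul_assoc, smul_sub, smul_smul, h2]
    rw [pow_succ μ n]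
  have hbound : ∀ n : ℕ, ‖f n‖ ≤ (‖1 - S * star S‖ * ‖a‖) * |μ| ^ n := by
    intro n
    rw [hf]
    simp only [norm_smul, Real.norm_eq_abs, abs_pow]
    rw [mul_comm]
    gcongr
    calc ‖S ^ n * (1 - S * star S) * a * (star S) ^ n‖
        ≤ ‖S ^ n * (1 - S * star S) * a‖ * ‖(star S) ^ n‖ := norm_mul_le _ _
      _ ≤ (‖S ^ n * (1 - S * star S)‖ * ‖a‖) * 1 := by
          gcongr
          · exact norm_mul_le _ _
          · exact hsSn n
      _ ≤ ((1 * ‖1 - S * star S‖) * ‖a‖) * 1 := by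
          gcongr
          exact (norm_mul_le _ _).trans (by gcongr; exact hSn n)
      _ = ‖1 - S * star S‖ * ‖a‖ := by ring
  have hsummable : Summable f := by
    apply Summable.of_norm_bounded (Summable.mul_left _
      (summable_geometric_of_lt_one (abs_nonneg μ) hμ)) hbound
  have hb0 : b 0 = a := by simp [hb]
  have hbtend : Filter.Tendsto b Filter.atTop (nhds 0) := by
    rw [tendsto_zero_iff_norm_tendsto_zero]
    apply squeeze_zero (fun n => norm_nonneg _) (fun n => ?_)
      (by simpa using (tendsto_pow_atTop_nhds_zero_of_lt_one (abs_nonneg μ) hμ).const_mul ‖a‖)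
    calc ‖b n‖ = |μ| ^ n * ‖S ^ n * a * (star S) ^ n‖ := by
          simp [hb, norm_smul, abs_pow]
      _ ≤ |μ| ^ n * ((1 * ‖a‖) * 1) := by
          gcongr
          calc ‖S ^ n * a * (star S) ^ n‖ ≤ ‖S ^ n * a‖ * ‖(star S) ^ n‖ := norm_mul_le _ _
            _ ≤ (1 * ‖a‖) * 1 := by
                gcongr
                · exact (norm_mul_le _ _).trans (by gcongr; exact hSn n)
                · exact hsSn n
      _ = ‖a‖ * |μ| ^ n := by ring
  have hsum := hsummable.hasSum
  have htend := hsum.tendsto_sum_nat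
  have hpartial : ∀ n : ℕ, ∑ i ∈ Finset.range n, f i = b 0 - b n := by
    intro n
    calc ∑ i ∈ Finset.range n, f i = ∑ i ∈ Finset.range n, (b i - b (i + 1)) := by
          exact Finset.sum_congr rfl fun i _ => key i
      _ = b 0 - b n := Finset.sum_range_sub' b n
  have htend2 : Filter.Tendsto (fun n => ∑ i ∈ Finset.range n, f i) Filter.atTop (nhds a) := by
    simp only [hpartial, hb0]
    simpa using Filter.Tendsto.const_sub a hbtend
  have : ∑' n, f n = a := tendsto_nhds_unique htend htend2
  rwa [this] at hsum
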